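/- (2-lame s-piders are sterile) Suppose a real 2-lame s-pider S is created in some stage of Chase(T_Q, green full s-pider), where Q ⊆ 𝔽_s is a set of s-pider queries. Then S is never used as the match of the left-hand side of any TGD from T_Q in any later chase step. -/

import Mathlib

/-!  A general framework for relational structures, conjunctive queries,
tuple generating dependencies (TGDs), and the chase, following
Gogacz–Marcinkowski, "The Hunt for a Red Spider: Conjunctive Query
Determinacy Is Undecidable". -/

namespace CQD

/-- A relational structure over relation symbols `R` and domain `D`:
a set of atoms, each a relation symbol together with its tuple of arguments. -/
abbrev Struc (R D : Type*) := Set (R × List D)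

/-- Map a structure along a function on domain elements. -/
def smap {R D E : Type*} (h : D → E) (S : Struc R D) : Struc R E :=
  (fun a => (a.1, a.2.map h)) '' S

/-- Terms over constants `K`: variables (natural numbers) or constants. -/
abbrev Term (K : Type*) := ℕ ⊕ K

/-- A conjunction of atoms over variables and constants from `K`. -/
abbrev Conj (R K : Type*) := Struc R (Term K)

/-- `h` is a homomorphism from the conjunction `Φ` into the structure `S`,
where the constants are interpreted by `ι`. -/
def IsHom {R K D : Type*} (Φ : Conj R K) (S : Struc R D) (ι : K → D) (h : ℕ → D) : Prop :=
  ∀ a ∈ Φ, (a.1, a.2.map (Sum.elim h ι)) ∈ S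

/-- A tuple-generating dependency `∀ x̄ ȳ (body(x̄,ȳ) → ∃ z̄ head(z̄,ȳ))`;
`frontier` is the set of universally quantified variables `ȳ` shared by body and head. -/
structure TGD (R K : Type*) where
  body : Conj R K
  head : Conj R K
  frontier : Set ℕ

/-- `Φ` holds in `S` at the tuple `b` (given on the frontier variables `fr`). -/
def holdsAt {R K D : Type*} (Φ : Conj R K) (fr : Set ℕ) (S : Struc R D) (ι : K → D)
    (b : ℕ → D) : Prop :=
  ∃ h : ℕ → D, IsHom Φ S ι h ∧ ∀ y ∈ fr, h y = b y

/-- A structure satisfies a TGD in the usual first-order sense. -/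
def TGD.sat {R K D : Type*} (T : TGD R K) (S : Struc R D) (ι : K → D) : Prop :=
  ∀ b, holdsAt T.body T.frontier S ι b → holdsAt T.head T.frontier S ι b

/-- The `ToDo` set: pairs `⟨b̄, T⟩` whose body is satisfied at `b̄` but which still
lack a witness for the head. -/
def ToDo {R K D : Type*} (𝒯 : Set (TGD R K)) (S : Struc R D) (ι : K → D) :
    Set ((ℕ → D) × TGD R K) :=
  {p | p.2 ∈ 𝒯 ∧ holdsAt p.2.body p.2.frontier S ι p.1 ∧
       ¬ holdsAt p.2.head p.2.frontier S ι p.1}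

/-- The active domain of a structure. -/
def adom {R D : Type*} (S : Struc R D) : Set D := {d | ∃ a ∈ S, d ∈ a.2}

/-- `S'` is the result of one application `T(S, b̄)` of the TGD `T` to `S` at tuple `b̄`:
a fresh copy of the head is added, its frontier variables identified with `b̄`. -/
def IsStep {R K D : Type*} (T : TGD R K) (S : Struc R D) (ι : K → D) (b : ℕ → D)
    (S' : Struc R D) : Prop :=
  ∃ g : ℕ → D,
    (∀ y ∈ T.frontier, g y = b y) ∧
    (∀ x ∉ T.frontier, g x ∉ adom S ∧ g x ∉ Set.range ι) ∧
    Set.InjOn g {x | x ∉ T.frontier} ∧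
    S' = S ∪ smap (Sum.elim g ι) T.head

/-- Union of the stages strictly below `i`. -/
def partUnion {X : Type*} (seq : Ordinal.{0} → Set X) (i : Ordinal.{0}) : Set X :=
  ⋃ j ∈ Set.Iio i, seq j

/-- A fair chase sequence for the set `𝒯` of TGDs starting from `D0`. -/
structure ChaseSeq {R K D : Type*} (𝒯 : Set (TGD R K)) (D0 : Struc R D) (ι : K → D) where
  len : Ordinal.{0}
  pos : 0 < len
  seq : Ordinal.{0} → Struc R D
  init : seq 0 = D0
  step : ∀ i, 0 < i → i < len →
    ∃ p ∈ ToDo 𝒯 (partUnion seq i) ι, IsStep p.2 (partUnion seq i) ι p.1 (seq i)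
  fair : ∀ i < len, ∀ p ∈ ToDo 𝒯 (partUnion seq i) ι,
    ∃ k, i < k ∧ k ≤ len ∧ p ∉ ToDo 𝒯 (partUnion seq k) ι

/-- The result of a chase sequence: the union of all its stages. -/
def ChaseSeq.result {R K D : Type*} {𝒯 : Set (TGD R K)} {D0 : Struc R D} {ι : K → D}
    (C : ChaseSeq 𝒯 D0 ι) : Struc R D := partUnion C.seq C.len

/-- `S` is (the result of) a chase of `𝒯` over `D0`. -/
def IsChase {R K D : Type*} (𝒯 : Set (TGD R K)) (D0 : Struc R D) (ι : K → D)
    (S : Struc R D) : Prop :=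
  ∃ C : ChaseSeq 𝒯 D0 ι, C.result = S

/-- A conjunctive query: a conjunction of atoms with designated free variables. -/
structure CQ (R K : Type*) where
  body : Conj R K
  free : Set ℕ

/-- Colored (green/red) relation symbols: `true` = green, `false` = red. -/
abbrev CRel (R : Type*) := R × Bool

/-- Paint all atoms of a conjunction with the color `c`. -/
def paint {R K : Type*} (c : Bool) (Φ : Conj R K) : Conj (CRel R) K :=
  (fun a => ((a.1, c), a.2)) '' Φ

/-- The view `Q(S)` defined by a query with body `Φ` and free variables `fr`
over the structure `S`: the set of satisfying assignments of the free variables. -/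
def eval {R K D : Type*} (Φ : Conj R K) (fr : Set ℕ) (S : Struc R D) (ι : K → D) :
    Set (ℕ → D) :=
  {b | holdsAt Φ fr S ι b}

/-- The green-red TGD generated by `Q`, from color `c` to the opposite color
(`tgdGR true Q` is `Q^{G→R}`, `tgdGR false Q` is `Q^{R→G}`). -/
def tgdGR {R K : Type*} (c : Bool) (Q : CQ R K) : TGD (CRel R) K :=
  ⟨paint c Q.body, paint (!c) Q.body, Q.free⟩

/-- The set `𝒯_𝒬` of green-red TGDs generated by a set of conjunctive queries. -/
def TQ {R K : Type*} (𝒬 : Set (CQ R K)) : Set (TGD (CRel R) K) :=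
  {T | ∃ Q ∈ 𝒬, ∃ c : Bool, T = tgdGR c Q}

end CQD

/-! The s-pider signature, ideal s-piders, s-pider queries and the s-pider chase. -/

namespace Spider

open CQD

/-- Relation symbols of the s-pider signature: a ternary `H`, thighs `T_i, T^i`
and calves `C_i, C^i` (all binary). -/
inductive SpRel (s : ℕ) : Type
  | H : SpRel s
  | Tlo : Fin s → SpRel s
  | Tup : Fin s → SpRel s
  | Clo : Fin s → SpRel s
  | Cup : Fin s → SpRel s

/-- Constants `c_i` (left) and `c^i` (right). -/
abbrev SpK (s : ℕ) := Fin s ⊕ Fin s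

abbrev SpTerm (s : ℕ) := CQD.Term (SpK s)

/-- The head variable `z`. -/
def vz (s : ℕ) : SpTerm s := Sum.inl 0
/-- The tail variable `z₁`. -/
def vtail (s : ℕ) : SpTerm s := Sum.inl 1
/-- The antenna variable `z₂`. -/
def vant (s : ℕ) : SpTerm s := Sum.inl 2
/-- The lower knee variable `x_i`. -/
def vx (s : ℕ) (i : Fin s) : SpTerm s := Sum.inl (2 * (i : ℕ) + 3)
/-- The upper knee variable `y_i`. -/
def vy (s : ℕ) (i : Fin s) : SpTerm s := Sum.inl (2 * (i : ℕ) + 4)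
/-- The constant `c_i`. -/
def clo (s : ℕ) (i : Fin s) : SpTerm s := Sum.inr (Sum.inl i)
/-- The constant `c^i`. -/
def cup (s : ℕ) (i : Fin s) : SpTerm s := Sum.inr (Sum.inr i)

/-- The conjunction `Φ_s`:
`H(z,z₁,z₂) ∧ ⋀ᵢ T_i(z,x_i) ∧ T^i(z,y_i) ∧ C_i(x_i,c_i) ∧ C^i(y_i,c^i)`. -/
def Phi (s : ℕ) : Conj (SpRel s) (SpK s) :=
  {(SpRel.H, [vz s, vtail s, vant s])} ∪
  ⋃ i : Fin s,
    ({(SpRel.Tlo i, [vz s, vx s i]), (SpRel.Tup i, [vz s, vy s i]),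
      (SpRel.Clo i, [vx s i, clo s i]), (SpRel.Cup i, [vy s i, cup s i])} :
      Set (SpRel s × List (SpTerm s)))

/-- The ideal s-pider of color `c` with (empty-or-singleton) upper lame index `I`
and lower lame index `J`: the `c`-colored `Φ_s` with the calf atoms indexed by `I`
and `J` recolored to the opposite color. -/
def idealSp (s : ℕ) (c : Bool) (I J : Option (Fin s)) :
    Struc (CRel (SpRel s)) (SpTerm s) :=
  {((SpRel.H, c), [vz s, vtail s, vant s])} ∪
  ⋃ i : Fin s,
    ({((SpRel.Tlo i, c), [vz s, vx s i]), ((SpRel.Tup i, c), [vz s, vy s i]),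
      ((SpRel.Clo i, if J = some i then !c else c), [vx s i, clo s i]),
      ((SpRel.Cup i, if I = some i then !c else c), [vy s i, cup s i])} :
      Set (CRel (SpRel s) × List (SpTerm s)))

/-- The s-pider query `f^I_J`: the conjunction `Φ_s` with the calves indexed by
`I` (upper) and `J` (lower) removed; its free variables are the corresponding knees. -/
def spq (s : ℕ) (I J : Option (Fin s)) : CQ (SpRel s) (SpK s) where
  body := Phi s \
    ({a | ∃ i ∈ I, a = (SpRel.Cup i, [vy s i, cup s i])} ∪
     {a | ∃ j ∈ J, a = (SpRel.Clo j, [vx s j, clo s j])})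
  free := {n | (∃ i ∈ I, n = 2 * (i : ℕ) + 4) ∨ (∃ j ∈ J, n = 2 * (j : ℕ) + 3)}

/-- The set `𝔽_s` of s-pider queries (1-lame and 2-lame). -/
def SpiderQs (s : ℕ) : Set (CQ (SpRel s) (SpK s)) :=
  {q | ∃ I J : Option (Fin s), (I.isSome ∨ J.isSome) ∧ q = spq s I J}

/-- The interpretation of the constants in the canonical domain. -/
def spι (s : ℕ) : SpK s → SpTerm s := Sum.inr

/-- `S` is (the result of) a chase of the green-red TGDs generated by `𝒬`,
starting from the ideal green full s-pider. -/
def SpChase (s : ℕ) (𝒬 : Set (CQ (SpRel s) (SpK s)))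
    (S : Struc (CRel (SpRel s)) (SpTerm s)) : Prop :=
  IsChase (TQ 𝒬) (idealSp s true none none) (spι s) S

/-- `x ⊆ y` for empty-or-singleton sets coded as `Option`. -/
def osub {s : ℕ} (x y : Option (Fin s)) : Prop := ∀ i : Fin s, x = some i → y = some i

/-- `y ∖ x` for empty-or-singleton sets coded as `Option` (assuming `x ⊆ y`). -/
def odiff {s : ℕ} (y x : Option (Fin s)) : Option (Fin s) :=
  match x with | none => y | some _ => none

/-- A copy of the canonical structure `T0` occurs inside `S` (an injective
renaming of vertices which fixes the constants). -/
def CopyIn {s : ℕ} {V : Type*} (T0 : Struc (CRel (SpRel s)) (SpTerm s))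
    (ι : SpK s → V) (S : Struc (CRel (SpRel s)) V) : Prop :=
  ∃ m : SpTerm s → V, Set.InjOn m (adom T0) ∧ (∀ k, m (Sum.inr k) = ι k) ∧
    smap m T0 ⊆ S

/-- `𝒮` is an isomorphic copy of the canonical structure `T0`. -/
def IsCopy {s : ℕ} {V : Type*} (T0 : Struc (CRel (SpRel s)) (SpTerm s))
    (ι : SpK s → V) (𝒮 : Struc (CRel (SpRel s)) V) : Prop :=
  ∃ m : SpTerm s → V, Set.InjOn m (adom T0) ∧ (∀ k, m (Sum.inr k) = ι k) ∧
    smap m T0 = 𝒮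

/-- Erase the colors of a colored structure. -/
def dalt {s : ℕ} {V : Type*} (S : Struc (CRel (SpRel s)) V) : Struc (SpRel s) V :=
  (fun a => (a.1.1, a.2)) '' S

/-- `𝒮` is a real s-pider in `S`: a minimal substructure whose daltonisation
satisfies `Φ_s`. -/
def RealSpider {s : ℕ} {V : Type*} (S 𝒮 : Struc (CRel (SpRel s)) V)
    (ι : SpK s → V) : Prop :=
  𝒮 ⊆ S ∧ (∃ h, IsHom (Phi s) (dalt 𝒮) ι h) ∧
    ∀ 𝒮' ⊂ 𝒮, ¬ ∃ h, IsHom (Phi s) (dalt 𝒮') ι h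

/-- Abstract ideal s-piders: a color and the two lame indices.  `𝔸_s`. -/
abbrev ISp (s : ℕ) := Bool × Option (Fin s) × Option (Fin s)

/-- The canonical structure of an abstract ideal s-pider. -/
def idealOf (s : ℕ) (p : ISp s) : Struc (CRel (SpRel s)) (SpTerm s) :=
  idealSp s p.1 p.2.1 p.2.2

/-- The zoo: all ideal s-piders isomorphic to some real s-pider in `S`. -/
def zoo {s : ℕ} (S : Struc (CRel (SpRel s)) (SpTerm s)) : Set (ISp s) :=
  {p | ∃ 𝒮, RealSpider S 𝒮 (spι s) ∧ IsCopy (idealOf s p) (spι s) 𝒮}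

/-- Closure of a set of abstract ideal s-piders under the partial functions
`f^I_J` for `(I,J) ∈ F`. -/
def ClosedUnder {s : ℕ} (F : Set (Option (Fin s) × Option (Fin s)))
    (Z : Set (ISp s)) : Prop :=
  ∀ IJ ∈ F, ∀ p ∈ Z, osub p.2.1 IJ.1 → osub p.2.2 IJ.2 →
    (!p.1, odiff IJ.1 p.2.1, odiff IJ.2 p.2.2) ∈ Z

end Spider

namespace Sterile
open CQD Spider

variable {s : ℕ}

lemma mem_Phi_iff (q : SpRel s × List (SpTerm s)) :
    q ∈ Phi s ↔ q = (SpRel.H, [vz s, vtail s, vant s]) ∨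
      ∃ k : Fin s, q = (SpRel.Tlo k, [vz s, vx s k]) ∨ q = (SpRel.Tup k, [vz s, vy s k]) ∨
        q = (SpRel.Clo k, [vx s k, clo s k]) ∨ q = (SpRel.Cup k, [vy s k, cup s k]) := by
  simp [Phi, Set.mem_iUnion]

lemma mem_ideal_iff (c : Bool) (I J : Option (Fin s)) (q : CRel (SpRel s) × List (SpTerm s)) :
    q ∈ idealSp s c I J ↔ q = ((SpRel.H, c), [vz s, vtail s, vant s]) ∨
      ∃ k : Fin s, q = ((SpRel.Tlo k, c), [vz s, vx s k]) ∨
        q = ((SpRel.Tup k, c), [vz s, vy s k]) ∨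
        q = ((SpRel.Clo k, if J = some k then !c else c), [vx s k, clo s k]) ∨
        q = ((SpRel.Cup k, if I = some k then !c else c), [vy s k, cup s k]) := by
  simp [idealSp, Set.mem_iUnion]

lemma mem_free_iff (I J : Option (Fin s)) (n : ℕ) :
    n ∈ (spq s I J).free ↔ (∃ k : Fin s, I = some k ∧ n = 2 * (k : ℕ) + 4) ∨
      (∃ k : Fin s, J = some k ∧ n = 2 * (k : ℕ) + 3) := by
  simp [spq, Option.mem_def]

end Sterile

namespace Sterile
open CQD Spider

variable {s : ℕ}

lemma body_H (I J : Option (Fin s)) :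
    (SpRel.H, [vz s, vtail s, vant s]) ∈ (spq s I J).body := by
  refine ⟨(mem_Phi_iff _).2 (Or.inl rfl), ?_⟩
  rintro (⟨i', hi', heq⟩ | ⟨j', hj', heq⟩) <;> simp at heq

lemma body_Tlo (I J : Option (Fin s)) (k : Fin s) :
    (SpRel.Tlo k, [vz s, vx s k]) ∈ (spq s I J).body := by
  refine ⟨(mem_Phi_iff _).2 (Or.inr ⟨k, Or.inl rfl⟩), ?_⟩
  rintro (⟨i', hi', heq⟩ | ⟨j', hj', heq⟩) <;> simp at heq

lemma body_Tup (I J : Option (Fin s)) (k : Fin s) :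
    (SpRel.Tup k, [vz s, vy s k]) ∈ (spq s I J).body := by
  refine ⟨(mem_Phi_iff _).2 (Or.inr ⟨k, Or.inr (Or.inl rfl)⟩), ?_⟩
  rintro (⟨i', hi', heq⟩ | ⟨j', hj', heq⟩) <;> simp at heq

lemma body_Clo (I J : Option (Fin s)) {k : Fin s} (hk : J ≠ some k) :
    (SpRel.Clo k, [vx s k, clo s k]) ∈ (spq s I J).body := by
  refine ⟨(mem_Phi_iff _).2 (Or.inr ⟨k, Or.inr (Or.inr (Or.inl rfl))⟩), ?_⟩
  rintro (⟨i', hi', heq⟩ | ⟨j', hj', heq⟩) <;> simp at heq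
  obtain ⟨rfl, -⟩ := heq
  exact hk (Option.mem_def.1 hj')

lemma body_Cup (I J : Option (Fin s)) {k : Fin s} (hk : I ≠ some k) :
    (SpRel.Cup k, [vy s k, cup s k]) ∈ (spq s I J).body := by
  refine ⟨(mem_Phi_iff _).2 (Or.inr ⟨k, Or.inr (Or.inr (Or.inr rfl))⟩), ?_⟩
  rintro (⟨i', hi', heq⟩ | ⟨j', hj', heq⟩) <;> simp at heq
  obtain ⟨rfl, -⟩ := heq
  exact hk (Option.mem_def.1 hi')

end Sterile

namespace Sterile
open CQD Spider

variable {s : ℕ}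

lemma hom_app {cb : Bool} {B : Conj (SpRel s) (SpK s)}
    {U : Struc (CRel (SpRel s)) (SpTerm s)} {h : ℕ → SpTerm s}
    (hh : IsHom (paint cb B) U (spι s) h) {r : SpRel s} {l : List (SpTerm s)}
    (hm : (r, l) ∈ B) : ((r, cb), l.map (Sum.elim h (spι s))) ∈ U :=
  hh ((r, cb), l) ⟨(r, l), hm, rfl⟩

lemma mem_adom_of {R D : Type*} {S : Struc R D} {r : R} {l : List D} {d : D}
    (h : (r, l) ∈ S) (hd : d ∈ l) : d ∈ adom S := ⟨(r, l), h, hd⟩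

lemma zero_not_free (I J : Option (Fin s)) : 0 ∉ (spq s I J).free := by
  rw [mem_free_iff]; rintro (⟨k, -, hk⟩ | ⟨k, -, hk⟩) <;> omega

lemma one_not_free (I J : Option (Fin s)) : 1 ∉ (spq s I J).free := by
  rw [mem_free_iff]; rintro (⟨k, -, hk⟩ | ⟨k, -, hk⟩) <;> omega

lemma two_not_free (I J : Option (Fin s)) : 2 ∉ (spq s I J).free := by
  rw [mem_free_iff]; rintro (⟨k, -, hk⟩ | ⟨k, -, hk⟩) <;> omega

lemma lo_not_free {I J : Option (Fin s)} {k : Fin s} (hk : J ≠ some k) :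
    2 * (k : ℕ) + 3 ∉ (spq s I J).free := by
  rw [mem_free_iff]
  rintro (⟨k', -, hk'⟩ | ⟨k', hk', he⟩)
  · omega
  · obtain rfl : k' = k := Fin.val_injective (by omega)
    exact hk hk'

lemma up_not_free {I J : Option (Fin s)} {k : Fin s} (hk : I ≠ some k) :
    2 * (k : ℕ) + 4 ∉ (spq s I J).free := by
  rw [mem_free_iff]
  rintro (⟨k', hk', he⟩ | ⟨k', -, hk'⟩)
  · obtain rfl : k' = k := Fin.val_injective (by omega)
    exact hk hk'
  · omega

lemma lo_free {I J : Option (Fin s)} {k : Fin s} (hk : J = some k) :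
    2 * (k : ℕ) + 3 ∈ (spq s I J).free := (mem_free_iff I J _).2 (Or.inr ⟨k, hk, rfl⟩)

lemma up_free {I J : Option (Fin s)} {k : Fin s} (hk : I = some k) :
    2 * (k : ℕ) + 4 ∈ (spq s I J).free := (mem_free_iff I J _).2 (Or.inl ⟨k, hk, rfl⟩)

end Sterile

namespace Sterile
open CQD Spider

variable {s : ℕ}

lemma mem_new_iff (cb : Bool) (I J : Option (Fin s)) (g : ℕ → SpTerm s)
    (q : CRel (SpRel s) × List (SpTerm s)) :
    q ∈ smap (Sum.elim g (spι s)) (paint (!cb) ((spq s I J).body)) ↔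
      q = ((SpRel.H, !cb), [g 0, g 1, g 2]) ∨
      (∃ k : Fin s, q = ((SpRel.Tlo k, !cb), [g 0, g (2 * (k : ℕ) + 3)])) ∨
      (∃ k : Fin s, q = ((SpRel.Tup k, !cb), [g 0, g (2 * (k : ℕ) + 4)])) ∨
      (∃ k : Fin s, J ≠ some k ∧
        q = ((SpRel.Clo k, !cb), [g (2 * (k : ℕ) + 3), spι s (Sum.inl k)])) ∨
      (∃ k : Fin s, I ≠ some k ∧
        q = ((SpRel.Cup k, !cb), [g (2 * (k : ℕ) + 4), spι s (Sum.inr k)])) := by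
  constructor
  · rintro ⟨q1, ⟨q2, ⟨hq2Phi, hq2r⟩, rfl⟩, rfl⟩
    rcases (mem_Phi_iff q2).1 hq2Phi with hh | ⟨k, hh | hh | hh | hh⟩ <;> subst hh
    · left; simp [vz, vtail, vant]
    · right; left; exact ⟨k, by simp [vz, vx]⟩
    · right; right; left; exact ⟨k, by simp [vz, vy]⟩
    · right; right; right; left
      refine ⟨k, ?_, by simp [vx, clo, spι]⟩
      intro hJ
      exact hq2r (Or.inr ⟨k, Option.mem_def.2 hJ, rfl⟩)
    · right; right; right; right
      refine ⟨k, ?_, by simp [vy, cup, spι]⟩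
      intro hI
      exact hq2r (Or.inl ⟨k, Option.mem_def.2 hI, rfl⟩)
  · rintro (rfl | ⟨k, rfl⟩ | ⟨k, rfl⟩ | ⟨k, hk, rfl⟩ | ⟨k, hk, rfl⟩)
    · exact ⟨_, ⟨_, body_H I J, rfl⟩, by simp [vz, vtail, vant]⟩
    · exact ⟨_, ⟨_, body_Tlo I J k, rfl⟩, by simp [vz, vx]⟩
    · exact ⟨_, ⟨_, body_Tup I J k, rfl⟩, by simp [vz, vy]⟩
    · exact ⟨_, ⟨_, body_Clo I J hk, rfl⟩, by simp [vx, clo, spι]⟩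
    · exact ⟨_, ⟨_, body_Cup I J hk, rfl⟩, by simp [vy, cup, spι]⟩

structure Inv (s : ℕ) (U : Struc (CRel (SpRel s)) (SpTerm s)) : Prop where
  hh : ∀ a c1 t1 u1 c2 t2 u2, ((SpRel.H, c1), [a, t1, u1]) ∈ U →
    ((SpRel.H, c2), [a, t2, u2]) ∈ U → c1 = c2 ∧ t1 = t2 ∧ u1 = u2
  tlo : ∀ a (k : Fin s) c1 v1 c2 v2, ((SpRel.Tlo k, c1), [a, v1]) ∈ U →
    ((SpRel.Tlo k, c2), [a, v2]) ∈ U → c1 = c2 ∧ v1 = v2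
  tup : ∀ a (k : Fin s) c1 v1 c2 v2, ((SpRel.Tup k, c1), [a, v1]) ∈ U →
    ((SpRel.Tup k, c2), [a, v2]) ∈ U → c1 = c2 ∧ v1 = v2
  clo : ∀ v (k1 k2 : Fin s) c1 c2 e1 e2, ((SpRel.Clo k1, c1), [v, e1]) ∈ U →
    ((SpRel.Clo k2, c2), [v, e2]) ∈ U → c1 = c2
  cup : ∀ v (k1 k2 : Fin s) c1 c2 e1 e2, ((SpRel.Cup k1, c1), [v, e1]) ∈ U →
    ((SpRel.Cup k2, c2), [v, e2]) ∈ U → c1 = c2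
  head : ∀ a c0 t u, ((SpRel.H, c0), [a, t, u]) ∈ U →
    ∃ (x y : Fin s → SpTerm s) (I J : Option (Fin s)),
      (∀ k, ((SpRel.Tlo k, c0), [a, x k]) ∈ U) ∧
      (∀ k, ((SpRel.Tup k, c0), [a, y k]) ∈ U) ∧
      (∀ k, J ≠ some k → ((SpRel.Clo k, c0), [x k, spι s (Sum.inl k)]) ∈ U) ∧
      (∀ k, I ≠ some k → ((SpRel.Cup k, c0), [y k, spι s (Sum.inr k)]) ∈ U) ∧
      ((I.isSome ∨ J.isSome) → ∃ w : ℕ → SpTerm s,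
        IsHom (paint (!c0) ((spq s I J).body)) U (spι s) w ∧
        (∀ k, I = some k → w (2 * (k : ℕ) + 4) = y k) ∧
        (∀ k, J = some k → w (2 * (k : ℕ) + 3) = x k))

end Sterile

namespace Sterile
open CQD Spider

variable {s : ℕ}

lemma isHom_mono {R K D : Type*} {Φ : Conj R K} {S S' : Struc R D} {ι : K → D} {h : ℕ → D}
    (hh : IsHom Φ S ι h) (hs : S ⊆ S') : IsHom Φ S' ι h := fun a ha => hs (hh a ha)

lemma inv_init : Inv s (idealSp s true none none) := by
  constructor
  · intro a c1 t1 u1 c2 t2 u2 h1 h2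
    rcases (mem_ideal_iff _ _ _ _).1 h1 with hh | ⟨k, hh | hh | hh | hh⟩ <;>
      rcases (mem_ideal_iff _ _ _ _).1 h2 with hh' | ⟨k', hh' | hh' | hh' | hh'⟩ <;>
      simp_all
  · intro a k c1 v1 c2 v2 h1 h2
    rcases (mem_ideal_iff _ _ _ _).1 h1 with hh | ⟨k1, hh | hh | hh | hh⟩ <;>
      rcases (mem_ideal_iff _ _ _ _).1 h2 with hh' | ⟨k2, hh' | hh' | hh' | hh'⟩ <;>
      simp_all
  · intro a k c1 v1 c2 v2 h1 h2
    rcases (mem_ideal_iff _ _ _ _).1 h1 with hh | ⟨k1, hh | hh | hh | hh⟩ <;>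
      rcases (mem_ideal_iff _ _ _ _).1 h2 with hh' | ⟨k2, hh' | hh' | hh' | hh'⟩ <;>
      simp_all
  · intro v k1 k2 c1 c2 e1 e2 h1 h2
    rcases (mem_ideal_iff _ _ _ _).1 h1 with hh | ⟨k1', hh | hh | hh | hh⟩ <;>
      rcases (mem_ideal_iff _ _ _ _).1 h2 with hh' | ⟨k2', hh' | hh' | hh' | hh'⟩ <;>
      simp_all
  · intro v k1 k2 c1 c2 e1 e2 h1 h2
    rcases (mem_ideal_iff _ _ _ _).1 h1 with hh | ⟨k1', hh | hh | hh | hh⟩ <;>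
      rcases (mem_ideal_iff _ _ _ _).1 h2 with hh' | ⟨k2', hh' | hh' | hh' | hh'⟩ <;>
      simp_all
  · intro a c0 t u hmem
    have ha : a = vz s ∧ c0 = true := by
      rcases (mem_ideal_iff _ _ _ _).1 hmem with hh | ⟨k, hh | hh | hh | hh⟩ <;> simp_all
    obtain ⟨rfl, rfl⟩ := ha
    refine ⟨fun k => vx s k, fun k => vy s k, none, none, ?_, ?_, ?_, ?_, ?_⟩
    · intro k; exact (mem_ideal_iff _ _ _ _).2 (Or.inr ⟨k, Or.inl rfl⟩)
    · intro k; exact (mem_ideal_iff _ _ _ _).2 (Or.inr ⟨k, Or.inr (Or.inl rfl)⟩)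
    · intro k _
      have := (mem_ideal_iff true none none
        ((SpRel.Clo k, if (none : Option (Fin s)) = some k then !true else true),
          [vx s k, clo s k])).2 (Or.inr ⟨k, Or.inr (Or.inr (Or.inl rfl))⟩)
      simpa [clo, spι] using this
    · intro k _
      have := (mem_ideal_iff true none none
        ((SpRel.Cup k, if (none : Option (Fin s)) = some k then !true else true),
          [vy s k, cup s k])).2 (Or.inr ⟨k, Or.inr (Or.inr (Or.inr rfl))⟩)
      simpa [cup, spι] using this
    · intro hs; simp at hs

end Sterile

namespace Sterile
open CQD Spider

variable {s : ℕ}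

lemma mem_partUnion {X : Type*} {seq : Ordinal.{0} → Set X} {m : Ordinal.{0}} {x : X} :
    x ∈ partUnion seq m ↔ ∃ j < m, x ∈ seq j := by
  simp [partUnion]

lemma partUnion_mono {X : Type*} (seq : Ordinal.{0} → Set X) {m1 m2 : Ordinal.{0}}
    (h : m1 ≤ m2) : partUnion seq m1 ⊆ partUnion seq m2 := by
  intro x hx
  obtain ⟨j, hj, hxj⟩ := mem_partUnion.1 hx
  exact mem_partUnion.2 ⟨j, lt_of_lt_of_le hj h, hxj⟩

lemma subset_partUnion {X : Type*} (seq : Ordinal.{0} → Set X) {j m : Ordinal.{0}}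
    (h : j < m) : seq j ⊆ partUnion seq m := fun x hx => mem_partUnion.2 ⟨j, h, hx⟩

lemma seq_mono {R K D : Type*} {𝒯 : Set (TGD R K)} {D0 : Struc R D} {ι : K → D}
    (C : ChaseSeq 𝒯 D0 ι) {j1 j2 : Ordinal.{0}} (h12 : j1 ≤ j2) (h2 : j2 < C.len) :
    C.seq j1 ⊆ C.seq j2 := by
  rcases eq_or_lt_of_le h12 with rfl | hlt
  · exact subset_rfl
  · obtain ⟨p, -, g, -, -, -, hS'⟩ := C.step j2 ((zero_le (a := j1)).trans_lt hlt) h2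
    rw [hS']
    exact (subset_partUnion C.seq hlt).trans Set.subset_union_left

lemma inv_partUnion {seq : Ordinal.{0} → Struc (CRel (SpRel s)) (SpTerm s)} {m : Ordinal.{0}}
    (hmono : ∀ j1 j2, j1 ≤ j2 → j2 < m → seq j1 ⊆ seq j2)
    (hinv : ∀ j < m, Inv s (seq j)) : Inv s (partUnion seq m) := by
  have key : ∀ {q1 q2 : CRel (SpRel s) × List (SpTerm s)},
      q1 ∈ partUnion seq m → q2 ∈ partUnion seq m →
      ∃ j < m, q1 ∈ seq j ∧ q2 ∈ seq j := by
    intro q1 q2 h1 h2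
    obtain ⟨j1, hj1, hq1⟩ := mem_partUnion.1 h1
    obtain ⟨j2, hj2, hq2⟩ := mem_partUnion.1 h2
    exact ⟨max j1 j2, max_lt hj1 hj2,
      hmono j1 _ (le_max_left _ _) (max_lt hj1 hj2) hq1,
      hmono j2 _ (le_max_right _ _) (max_lt hj1 hj2) hq2⟩
  constructor
  · intro a c1 t1 u1 c2 t2 u2 h1 h2
    obtain ⟨j, hj, h1', h2'⟩ := key h1 h2
    exact (hinv j hj).hh _ _ _ _ _ _ _ h1' h2'
  · intro a k c1 v1 c2 v2 h1 h2
    obtain ⟨j, hj, h1', h2'⟩ := key h1 h2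
    exact (hinv j hj).tlo _ _ _ _ _ _ h1' h2'
  · intro a k c1 v1 c2 v2 h1 h2
    obtain ⟨j, hj, h1', h2'⟩ := key h1 h2
    exact (hinv j hj).tup _ _ _ _ _ _ h1' h2'
  · intro v k1 k2 c1 c2 e1 e2 h1 h2
    obtain ⟨j, hj, h1', h2'⟩ := key h1 h2
    exact (hinv j hj).clo _ _ _ _ _ _ _ h1' h2'
  · intro v k1 k2 c1 c2 e1 e2 h1 h2
    obtain ⟨j, hj, h1', h2'⟩ := key h1 h2
    exact (hinv j hj).cup _ _ _ _ _ _ _ h1' h2'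
  · intro a c0 t u hmem
    obtain ⟨j, hj, hq⟩ := mem_partUnion.1 hmem
    obtain ⟨x, y, I, J, h1, h2, h3, h4, h5⟩ := (hinv j hj).head _ _ _ _ hq
    have hsub : seq j ⊆ partUnion seq m := subset_partUnion seq hj
    refine ⟨x, y, I, J, fun k => hsub (h1 k), fun k => hsub (h2 k),
      fun k hk => hsub (h3 k hk), fun k hk => hsub (h4 k hk), ?_⟩
    intro hs
    obtain ⟨w, hw, hwi, hwj⟩ := h5 hs
    exact ⟨w, isHom_mono hw hsub, hwi, hwj⟩

end Sterile

namespace Sterile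
open CQD Spider

variable {s : ℕ}

lemma new_H {cb : Bool} {I J : Option (Fin s)} {g : ℕ → SpTerm s} {c1 : Bool}
    {a t1 u1 : SpTerm s}
    (h : ((SpRel.H, c1), [a, t1, u1]) ∈ smap (Sum.elim g (spι s)) (paint (!cb) ((spq s I J).body))) :
    c1 = !cb ∧ a = g 0 ∧ t1 = g 1 ∧ u1 = g 2 := by
  rcases (mem_new_iff cb I J g _).1 h with hq | ⟨k, hq⟩ | ⟨k, hq⟩ | ⟨k, -, hq⟩ | ⟨k, -, hq⟩ <;>
    simp only [Prod.mk.injEq, List.cons.injEq, and_true] at hq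
  · exact ⟨hq.1.2, hq.2.1, hq.2.2.1, hq.2.2.2⟩
  all_goals exact absurd hq.1.1 (by simp)

lemma new_Tlo {cb : Bool} {I J : Option (Fin s)} {g : ℕ → SpTerm s} {c1 : Bool} {k : Fin s}
    {a v : SpTerm s}
    (h : ((SpRel.Tlo k, c1), [a, v]) ∈ smap (Sum.elim g (spι s)) (paint (!cb) ((spq s I J).body))) :
    c1 = !cb ∧ a = g 0 ∧ v = g (2 * (k : ℕ) + 3) := by
  rcases (mem_new_iff cb I J g _).1 h with hq | ⟨k', hq⟩ | ⟨k', hq⟩ | ⟨k', -, hq⟩ | ⟨k', -, hq⟩ <;>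
    simp only [Prod.mk.injEq, List.cons.injEq, and_true] at hq
  · exact absurd hq.1.1 (by simp)
  · obtain ⟨⟨hk, hc⟩, h1, h2⟩ := hq
    obtain rfl : k = k' := by injection hk
    exact ⟨hc, h1, h2⟩
  all_goals exact absurd hq.1.1 (by simp)

lemma new_Tup {cb : Bool} {I J : Option (Fin s)} {g : ℕ → SpTerm s} {c1 : Bool} {k : Fin s}
    {a v : SpTerm s}
    (h : ((SpRel.Tup k, c1), [a, v]) ∈ smap (Sum.elim g (spι s)) (paint (!cb) ((spq s I J).body))) :
    c1 = !cb ∧ a = g 0 ∧ v = g (2 * (k : ℕ) + 4) := by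
  rcases (mem_new_iff cb I J g _).1 h with hq | ⟨k', hq⟩ | ⟨k', hq⟩ | ⟨k', -, hq⟩ | ⟨k', -, hq⟩ <;>
    simp only [Prod.mk.injEq, List.cons.injEq, and_true] at hq
  · exact absurd hq.1.1 (by simp)
  · exact absurd hq.1.1 (by simp)
  · obtain ⟨⟨hk, hc⟩, h1, h2⟩ := hq
    obtain rfl : k = k' := by injection hk
    exact ⟨hc, h1, h2⟩
  all_goals exact absurd hq.1.1 (by simp)

lemma new_Clo {cb : Bool} {I J : Option (Fin s)} {g : ℕ → SpTerm s} {c1 : Bool} {k : Fin s}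
    {v e : SpTerm s}
    (h : ((SpRel.Clo k, c1), [v, e]) ∈ smap (Sum.elim g (spι s)) (paint (!cb) ((spq s I J).body))) :
    c1 = !cb ∧ J ≠ some k ∧ v = g (2 * (k : ℕ) + 3) := by
  rcases (mem_new_iff cb I J g _).1 h with hq | ⟨k', hq⟩ | ⟨k', hq⟩ | ⟨k', hk', hq⟩ | ⟨k', -, hq⟩ <;>
    simp only [Prod.mk.injEq, List.cons.injEq, and_true] at hq
  · exact absurd hq.1.1 (by simp)
  · exact absurd hq.1.1 (by simp)
  · exact absurd hq.1.1 (by simp)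
  · obtain ⟨⟨hk, hc⟩, h1, h2⟩ := hq
    obtain rfl : k = k' := by injection hk
    exact ⟨hc, hk', h1⟩
  · exact absurd hq.1.1 (by simp)

lemma new_Cup {cb : Bool} {I J : Option (Fin s)} {g : ℕ → SpTerm s} {c1 : Bool} {k : Fin s}
    {v e : SpTerm s}
    (h : ((SpRel.Cup k, c1), [v, e]) ∈ smap (Sum.elim g (spι s)) (paint (!cb) ((spq s I J).body))) :
    c1 = !cb ∧ I ≠ some k ∧ v = g (2 * (k : ℕ) + 4) := by
  rcases (mem_new_iff cb I J g _).1 h with hq | ⟨k', hq⟩ | ⟨k', hq⟩ | ⟨k', -, hq⟩ | ⟨k', hk', hq⟩ <;>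
    simp only [Prod.mk.injEq, List.cons.injEq, and_true] at hq
  · exact absurd hq.1.1 (by simp)
  · exact absurd hq.1.1 (by simp)
  · exact absurd hq.1.1 (by simp)
  · exact absurd hq.1.1 (by simp)
  · obtain ⟨⟨hk, hc⟩, h1, h2⟩ := hq
    obtain rfl : k = k' := by injection hk
    exact ⟨hc, hk', h1⟩

end Sterile

namespace Sterile
open CQD Spider

variable {s : ℕ}

lemma inv_step {𝒬 : Set (CQ (SpRel s) (SpK s))} (h𝒬 : 𝒬 ⊆ SpiderQs s)
    {U S' : Struc (CRel (SpRel s)) (SpTerm s)}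
    {p : (ℕ → SpTerm s) × TGD (CRel (SpRel s)) (SpK s)}
    (hU : Inv s U) (hp : p ∈ ToDo (TQ 𝒬) U (spι s))
    (hstep : IsStep p.2 U (spι s) p.1 S') : Inv s S' := by
  obtain ⟨hpT, hbody, -⟩ := hp
  obtain ⟨Q, hQ, cb, hpeq⟩ := hpT
  obtain ⟨I, J, hsome, rfl⟩ := h𝒬 hQ
  obtain ⟨g, hgfr, hgfresh, -, rfl⟩ := hstep
  rw [hpeq] at hbody hgfr hgfresh ⊢
  obtain ⟨hb, hbhom, hbfr⟩ := hbody
  simp only [tgdGR] at hbhom hbfr hgfr hgfresh ⊢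
  have fresh0 : g 0 ∉ adom U := (hgfresh 0 (zero_not_free I J)).1
  have freshlo : ∀ k : Fin s, J ≠ some k → g (2 * (k : ℕ) + 3) ∉ adom U :=
    fun k hk => (hgfresh _ (lo_not_free hk)).1
  have freshup : ∀ k : Fin s, I ≠ some k → g (2 * (k : ℕ) + 4) ∉ adom U :=
    fun k hk => (hgfresh _ (up_not_free hk)).1
  constructor
  · intro a c1 t1 u1 c2 t2 u2 h1 h2
    rcases h1 with h1 | h1 <;> rcases h2 with h2 | h2
    · exact hU.hh _ _ _ _ _ _ _ h1 h2
    · obtain ⟨rfl, rfl, rfl, rfl⟩ := new_H h2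
      exact absurd (mem_adom_of h1 (by simp)) fresh0
    · obtain ⟨rfl, rfl, rfl, rfl⟩ := new_H h1
      exact absurd (mem_adom_of h2 (by simp)) fresh0
    · obtain ⟨rfl, rfl, rfl, rfl⟩ := new_H h1
      obtain ⟨h2c, -, h2t, h2u⟩ := new_H h2
      exact ⟨h2c.symm, h2t.symm, h2u.symm⟩
  · intro a k c1 v1 c2 v2 h1 h2
    rcases h1 with h1 | h1 <;> rcases h2 with h2 | h2
    · exact hU.tlo _ _ _ _ _ _ h1 h2
    · obtain ⟨rfl, rfl, rfl⟩ := new_Tlo h2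
      exact absurd (mem_adom_of h1 (by simp)) fresh0
    · obtain ⟨rfl, rfl, rfl⟩ := new_Tlo h1
      exact absurd (mem_adom_of h2 (by simp)) fresh0
    · obtain ⟨rfl, rfl, rfl⟩ := new_Tlo h1
      obtain ⟨h2c, -, h2v⟩ := new_Tlo h2
      exact ⟨h2c.symm, h2v.symm⟩
  · intro a k c1 v1 c2 v2 h1 h2
    rcases h1 with h1 | h1 <;> rcases h2 with h2 | h2
    · exact hU.tup _ _ _ _ _ _ h1 h2
    · obtain ⟨rfl, rfl, rfl⟩ := new_Tup h2
      exact absurd (mem_adom_of h1 (by simp)) fresh0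
    · obtain ⟨rfl, rfl, rfl⟩ := new_Tup h1
      exact absurd (mem_adom_of h2 (by simp)) fresh0
    · obtain ⟨rfl, rfl, rfl⟩ := new_Tup h1
      obtain ⟨h2c, -, h2v⟩ := new_Tup h2
      exact ⟨h2c.symm, h2v.symm⟩
  · intro v k1 k2 c1 c2 e1 e2 h1 h2
    rcases h1 with h1 | h1 <;> rcases h2 with h2 | h2
    · exact hU.clo _ _ _ _ _ _ _ h1 h2
    · obtain ⟨rfl, hk2, rfl⟩ := new_Clo h2
      exact absurd (mem_adom_of h1 (by simp)) (freshlo _ hk2)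
    · obtain ⟨rfl, hk1, rfl⟩ := new_Clo h1
      exact absurd (mem_adom_of h2 (by simp)) (freshlo _ hk1)
    · obtain ⟨rfl, -, -⟩ := new_Clo h1
      exact (new_Clo h2).1.symm
  · intro v k1 k2 c1 c2 e1 e2 h1 h2
    rcases h1 with h1 | h1 <;> rcases h2 with h2 | h2
    · exact hU.cup _ _ _ _ _ _ _ h1 h2
    · obtain ⟨rfl, hk2, rfl⟩ := new_Cup h2
      exact absurd (mem_adom_of h1 (by simp)) (freshup _ hk2)
    · obtain ⟨rfl, hk1, rfl⟩ := new_Cup h1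
      exact absurd (mem_adom_of h2 (by simp)) (freshup _ hk1)
    · obtain ⟨rfl, -, -⟩ := new_Cup h1
      exact (new_Cup h2).1.symm
  · intro a c0 t u hmem
    rcases hmem with hmem | hmem
    · obtain ⟨x, y, I0, J0, h1, h2, h3, h4, h5⟩ := hU.head _ _ _ _ hmem
      refine ⟨x, y, I0, J0, fun k => Or.inl (h1 k), fun k => Or.inl (h2 k),
        fun k hk => Or.inl (h3 k hk), fun k hk => Or.inl (h4 k hk), ?_⟩
      intro hs
      obtain ⟨w, hw, hwi, hwj⟩ := h5 hs
      exact ⟨w, isHom_mono hw Set.subset_union_left, hwi, hwj⟩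
    · obtain ⟨rfl, rfl, rfl, rfl⟩ := new_H hmem
      refine ⟨fun k => g (2 * (k : ℕ) + 3), fun k => g (2 * (k : ℕ) + 4), I, J,
        ?_, ?_, ?_, ?_, ?_⟩
      · intro k
        exact Or.inr ((mem_new_iff cb I J g _).2 (Or.inr (Or.inl ⟨k, rfl⟩)))
      · intro k
        exact Or.inr ((mem_new_iff cb I J g _).2 (Or.inr (Or.inr (Or.inl ⟨k, rfl⟩))))
      · intro k hk
        exact Or.inr ((mem_new_iff cb I J g _).2
          (Or.inr (Or.inr (Or.inr (Or.inl ⟨k, hk, rfl⟩)))))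
      · intro k hk
        exact Or.inr ((mem_new_iff cb I J g _).2
          (Or.inr (Or.inr (Or.inr (Or.inr ⟨k, hk, rfl⟩)))))
      · intro _
        refine ⟨hb, ?_, ?_, ?_⟩
        · rw [Bool.not_not]
          exact isHom_mono hbhom Set.subset_union_left
        · intro k hk
          exact (hbfr _ (up_free hk)).trans (hgfr _ (up_free hk)).symm
        · intro k hk
          exact (hbfr _ (lo_free hk)).trans (hgfr _ (lo_free hk)).symm

end Sterile

namespace Sterile
open CQD Spider

variable {s : ℕ}

lemma inv_stage {𝒬 : Set (CQ (SpRel s) (SpK s))} (h𝒬 : 𝒬 ⊆ SpiderQs s)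
    (C : ChaseSeq (TQ 𝒬) (idealSp s true none none) (spι s)) :
    ∀ m, m < C.len → Inv s (C.seq m) := by
  intro m
  induction m using Ordinal.induction with
  | h m IH =>
    intro hm
    rcases eq_or_ne m 0 with rfl | hm0
    · rw [C.init]; exact inv_init
    · obtain ⟨p, hpToDo, hstep⟩ := C.step m (pos_iff_ne_zero.2 hm0) hm
      have hPU : Inv s (partUnion C.seq m) :=
        inv_partUnion (fun j1 j2 h12 h2 => seq_mono C h12 (h2.trans hm))
          (fun j hj => IH j hj (hj.trans hm))
      exact inv_step h𝒬 hPU hpToDo hstep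

lemma copy_facts {c : Bool} {i j : Fin s} {𝒮 : Struc (CRel (SpRel s)) (SpTerm s)}
    (h2 : IsCopy (idealSp s c (some i) (some j)) (spι s) 𝒮)
    {a t u : SpTerm s} (hhead : ((SpRel.H, c), [a, t, u]) ∈ 𝒮) :
    ∃ X Y : Fin s → SpTerm s,
      (∀ k, ((SpRel.Tlo k, c), [a, X k]) ∈ 𝒮) ∧
      (∀ k, ((SpRel.Tup k, c), [a, Y k]) ∈ 𝒮) ∧
      ((SpRel.Clo j, !c), [X j, spι s (Sum.inl j)]) ∈ 𝒮 ∧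
      ((SpRel.Cup i, !c), [Y i, spι s (Sum.inr i)]) ∈ 𝒮 := by
  obtain ⟨m0, -, hfix, hmap⟩ := h2
  subst hmap
  have ha : a = m0 (vz s) := by
    obtain ⟨q, hq, heq⟩ := hhead
    rcases (mem_ideal_iff _ _ _ _).1 hq with hh | ⟨k, hh | hh | hh | hh⟩
    rotate_left
    · subst hh; simp at heq
    · subst hh; simp at heq
    · subst hh; simp at heq
    · subst hh; simp at heq
    subst hh
    simp only [Prod.mk.injEq, List.cons.injEq, List.map, and_true] at heq
    exact heq.2.1.symm
  subst ha
  refine ⟨fun k => m0 (vx s k), fun k => m0 (vy s k), ?_, ?_, ?_, ?_⟩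
  · intro k
    exact ⟨_, (mem_ideal_iff _ _ _ _).2 (Or.inr ⟨k, Or.inl rfl⟩), rfl⟩
  · intro k
    exact ⟨_, (mem_ideal_iff _ _ _ _).2 (Or.inr ⟨k, Or.inr (Or.inl rfl)⟩), rfl⟩
  · refine ⟨((SpRel.Clo j, if (some j : Option (Fin s)) = some j then !c else c), [vx s j, clo s j]),
      (mem_ideal_iff _ _ _ _).2 (Or.inr ⟨j, Or.inr (Or.inr (Or.inl rfl))⟩), ?_⟩
    simp [clo, hfix, spι]
  · refine ⟨((SpRel.Cup i, if (some i : Option (Fin s)) = some i then !c else c), [vy s i, cup s i]),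
      (mem_ideal_iff _ _ _ _).2 (Or.inr ⟨i, Or.inr (Or.inr (Or.inr rfl))⟩), ?_⟩
    simp [cup, hfix, spι]

end Sterile

open CQD Spider in
/-- **2-lame s-piders are sterile.**  If a real 2-lame s-pider `𝒮`
(with head `a`) occurs in some stage of a fair chase of `𝒯_𝒬` (for `𝒬 ⊆ 𝔽_s`)
starting from the green full s-pider, then no later chase step matches the
left-hand side of its TGD at `𝒮` (the head variable `z` — variable `0` of every
s-pider query — is never mapped to `a` by the homomorphism underlying a later step). -/
theorem two_lame_sterile (s : ℕ) (𝒬 : Set (CQD.CQ (SpRel s) (SpK s)))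
    (h𝒬 : 𝒬 ⊆ SpiderQs s)
    (C : ChaseSeq (TQ 𝒬) (idealSp s true none none) (spι s))
    (n : Ordinal.{0}) (hn : n < C.len)
    (c : Bool) (i j : Fin s) (𝒮 : Struc (CRel (SpRel s)) (SpTerm s))
    (hreal : RealSpider (partUnion C.seq n) 𝒮 (spι s))
    (h2lame : IsCopy (idealSp s c (some i) (some j)) (spι s) 𝒮)
    (a t u : SpTerm s) (hhead : ((SpRel.H, c), [a, t, u]) ∈ 𝒮) :
    ∀ m : Ordinal.{0}, n ≤ m → 0 < m → m < C.len →
      ∀ p ∈ ToDo (TQ 𝒬) (partUnion C.seq m) (spι s),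
        IsStep p.2 (partUnion C.seq m) (spι s) p.1 (C.seq m) →
        ∀ h : ℕ → SpTerm s,
          IsHom p.2.body (partUnion C.seq m) (spι s) h →
          (∀ y ∈ p.2.frontier, h y = p.1 y) →
          h 0 ≠ a := by
  intro m hnm hm0 hmlen p hpToDo hstep h hhom hfr h0a
  open Sterile in
  have hInv : Sterile.Inv s (partUnion C.seq m) :=
    Sterile.inv_partUnion (fun j1 j2 h12 h2 => Sterile.seq_mono C h12 (h2.trans hmlen))
      (fun jj hj => Sterile.inv_stage h𝒬 C jj (hj.trans hmlen))
  have hSU : 𝒮 ⊆ partUnion C.seq m :=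
    hreal.1.trans (Sterile.partUnion_mono C.seq hnm)
  obtain ⟨X, Y, hXlegs, hYlegs, hXcalf, hYcalf⟩ := Sterile.copy_facts h2lame hhead
  obtain ⟨hpT, hbholds, hnohead⟩ := hpToDo
  obtain ⟨Q, hQ, cb, hpeq⟩ := hpT
  obtain ⟨I, J, hsome, rfl⟩ := h𝒬 hQ
  rw [hpeq] at hhom hfr hnohead
  simp only [tgdGR] at hhom hfr hnohead
  subst h0a
  -- the H atom of the body
  have hH : ((SpRel.H, cb), [h 0, h 1, h 2]) ∈ partUnion C.seq m := by
    have := Sterile.hom_app hhom (Sterile.body_H I J)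
    simpa [vz, vtail, vant] using this
  obtain ⟨hcb, -, -⟩ := hInv.hh _ _ _ _ _ _ _ hH (hSU hhead)
  subst hcb
  -- the record of the head of 𝒮
  obtain ⟨x, y, I0, J0, hxlegs, hylegs, hxcalf, hycalf, hwit⟩ :=
    hInv.head _ _ _ _ (hSU hhead)
  have hXx : ∀ k, X k = x k :=
    fun k => (hInv.tlo _ _ _ _ _ _ (hSU (hXlegs k)) (hxlegs k)).2
  have hYy : ∀ k, Y k = y k :=
    fun k => (hInv.tup _ _ _ _ _ _ (hSU (hYlegs k)) (hylegs k)).2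
  have hhx : ∀ k : Fin s, h (2 * (k : ℕ) + 3) = x k := by
    intro k
    have hm : ((SpRel.Tlo k, cb), [h 0, h (2 * (k : ℕ) + 3)]) ∈ partUnion C.seq m := by
      have := Sterile.hom_app hhom (Sterile.body_Tlo I J k)
      simpa [vz, vx] using this
    exact (hInv.tlo _ _ _ _ _ _ hm (hxlegs k)).2
  have hhy : ∀ k : Fin s, h (2 * (k : ℕ) + 4) = y k := by
    intro k
    have hm : ((SpRel.Tup k, cb), [h 0, h (2 * (k : ℕ) + 4)]) ∈ partUnion C.seq m := by
      have := Sterile.hom_app hhom (Sterile.body_Tup I J k)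
      simpa [vz, vy] using this
    exact (hInv.tup _ _ _ _ _ _ hm (hylegs k)).2
  have hJ0 : J0 = some j := by
    by_contra hne
    have h1 := hxcalf j hne
    have h2 := hSU hXcalf
    rw [hXx j] at h2
    have := hInv.clo _ _ _ _ _ _ _ h1 h2
    simp at this
  have hI0 : I0 = some i := by
    by_contra hne
    have h1 := hycalf i hne
    have h2 := hSU hYcalf
    rw [hYy i] at h2
    have := hInv.cup _ _ _ _ _ _ _ h1 h2
    simp at this
  have hJ : J = some j := by
    by_contra hne
    have h1 : ((SpRel.Clo j, cb), [h (2 * (j : ℕ) + 3), spι s (Sum.inl j)]) ∈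
        partUnion C.seq m := by
      have := Sterile.hom_app hhom (Sterile.body_Clo I J hne)
      simpa [vx, clo, spι] using this
    rw [hhx j] at h1
    have h2 := hSU hXcalf
    rw [hXx j] at h2
    have := hInv.clo _ _ _ _ _ _ _ h1 h2
    simp at this
  have hI : I = some i := by
    by_contra hne
    have h1 : ((SpRel.Cup i, cb), [h (2 * (i : ℕ) + 4), spι s (Sum.inr i)]) ∈
        partUnion C.seq m := by
      have := Sterile.hom_app hhom (Sterile.body_Cup I J hne)
      simpa [vy, cup, spι] using this
    rw [hhy i] at h1
    have h2 := hSU hYcalf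
    rw [hYy i] at h2
    have := hInv.cup _ _ _ _ _ _ _ h1 h2
    simp at this
  subst hJ hI hJ0 hI0
  obtain ⟨w, hwhom, hwI, hwJ⟩ := hwit (by simp)
  refine hnohead ⟨w, hwhom, ?_⟩
  intro z hz
  rcases (Sterile.mem_free_iff _ _ z).1 hz with ⟨k, hk, rfl⟩ | ⟨k, hk, rfl⟩
  · obtain rfl : i = k := by injection hk
    rw [hwI i rfl, ← hfr _ hz, hhy i]
  · obtain rfl : j = k := by injection hk
    rw [hwJ j rfl, ← hfr _ hz, hhx j]
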